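/- Let τ = {T; M, M, K} be a passive selfadjoint system with T = [[D, C], [C*, F]] a selfadjoint contraction on M ⊕ K, and assume τ is minimal, i.e. T is M-simple: span{Tⁿh : n ≥ 0, h ∈ M} is dense in M ⊕ K. If the transfer function Ω(z) = D + zC(I − zF)⁻¹C* takes unitary values at every point ξ of the unit circle with ξ ≠ ±1 (i.e. Ω is inner), then T is unitary. -/

import Mathlib

open Complex ContinuousLinearMap

noncomputable section

variable {M K : Type*} [NormedAddCommGroup M] [InnerProductSpace ℂ M] [CompleteSpace M]
  [TopologicalSpace.SeparableSpace M]
  [NormedAddCommGroup K] [InnerProductSpace ℂ K] [CompleteSpace K]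
  [TopologicalSpace.SeparableSpace K]

/-- The domain `Z = ℂ ∖ ((−∞,−1] ∪ [1,+∞))`. -/
def Zdom : Set ℂ := {z : ℂ | z ∉ (fun x : ℝ => (x : ℂ)) '' (Set.Iic (-1) ∪ Set.Ici 1)}

/-- The `2×2` block operator `[[D, C], [B, F]]` on the Hilbert direct sum `M ⊕ K`. -/
def blockOp (D : M →L[ℂ] M) (C : K →L[ℂ] M) (B : M →L[ℂ] K) (F : K →L[ℂ] K) :
    WithLp 2 (M × K) →L[ℂ] WithLp 2 (M × K) :=
  ((WithLp.prodContinuousLinearEquiv 2 ℂ M K).symm : (M × K) →L[ℂ] WithLp 2 (M × K)) ∘L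
    ((D ∘L ContinuousLinearMap.fst ℂ M K + C ∘L ContinuousLinearMap.snd ℂ M K).prod
      (B ∘L ContinuousLinearMap.fst ℂ M K + F ∘L ContinuousLinearMap.snd ℂ M K)) ∘L
    ((WithLp.prodContinuousLinearEquiv 2 ℂ M K) : WithLp 2 (M × K) →L[ℂ] (M × K))

/-- The canonical embedding of `M` into the Hilbert direct sum `M ⊕ K`. -/
def inlM : M →L[ℂ] WithLp 2 (M × K) :=
  ((WithLp.prodContinuousLinearEquiv 2 ℂ M K).symm : (M × K) →L[ℂ] WithLp 2 (M × K)) ∘L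
    ContinuousLinearMap.inl ℂ M K

/-! ### Auxiliary lemmas -/

lemma mem_Zdom {z : ℂ} : z ∈ Zdom ↔ z.im ≠ 0 ∨ (-1 < z.re ∧ z.re < 1) := by
  unfold Zdom
  simp only [Set.mem_setOf_eq, Set.mem_image, Set.mem_union, Set.mem_Iic, Set.mem_Ici, not_exists,
    not_and, not_or]
  constructor
  · intro h
    by_cases him : z.im = 0
    · refine Or.inr ?_
      have hz : (z.re : ℂ) = z := Complex.ext (by simp) (by simp [him])
      have := h z.re
      constructor
      · by_contra hc; push_neg at hc
        exact (this (Or.inl (by linarith))) hz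
      · by_contra hc; push_neg at hc
        exact (this (Or.inr (by linarith))) hz
    · exact Or.inl him
  · rintro h x hx hxz
    rcases h with h | ⟨h1, h2⟩
    · rw [← hxz] at h; simp at h
    · rw [← hxz] at h1 h2; simp at h1 h2
      rcases hx with hx | hx <;> linarith

lemma isOpen_Zdom : IsOpen Zdom := by
  have h : Zdom = (Complex.im ⁻¹' {(0:ℝ)}ᶜ) ∪ (Complex.re ⁻¹' Set.Ioo (-1) 1) := by
    ext z
    simp only [mem_Zdom, Set.mem_union, Set.mem_preimage, Set.mem_compl_iff,
      Set.mem_singleton_iff, Set.mem_Ioo]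
  rw [h]
  exact ((isOpen_compl_singleton).preimage Complex.continuous_im).union
    (isOpen_Ioo.preimage Complex.continuous_re)

lemma starConvex_Zdom : StarConvex ℝ (0 : ℂ) Zdom := by
  intro y hy a b ha hb hab
  rw [smul_zero, zero_add]
  rw [mem_Zdom] at hy ⊢
  have hb1 : b ≤ 1 := by linarith
  have hsm : (b • y).im = b * y.im ∧ (b • y).re = b * y.re := by
    constructor <;> simp [Complex.real_smul]
  rcases hy with him | ⟨h1, h2⟩
  · rcases eq_or_lt_of_le hb with hb0 | hb0
    · right; rw [hsm.2]; rw [← hb0]; norm_num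
    · left; rw [hsm.1]; exact mul_ne_zero (ne_of_gt hb0) him
  · right; rw [hsm.2]; constructor <;> nlinarith

lemma isPreconnected_Zdom : IsPreconnected Zdom := by
  have hne : Zdom.Nonempty := ⟨0, by rw [mem_Zdom]; right; norm_num⟩
  have : ContractibleSpace Zdom := starConvex_Zdom.contractibleSpace hne
  exact isPreconnected_iff_preconnectedSpace.mpr inferInstance

lemma inner_cancel {E : Type*} [NormedAddCommGroup E] [InnerProductSpace ℂ E] [CompleteSpace E]
    (A : E →L[ℂ] E) (hA : IsSelfAdjoint A) (hpos : ∀ x, 0 ≤ Complex.re (inner ℂ x (A x) : ℂ))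
    (h : E) (hh : (inner ℂ h (A h) : ℂ) = 0) : A h = 0 := by
  have hadj : ContinuousLinearMap.adjoint A = A := isSelfAdjoint_iff'.mp hA
  have key : ∀ y : E, Complex.re (inner ℂ y (A h) : ℂ) = 0 := by
    intro y
    set a := Complex.re (inner ℂ y (A h) : ℂ) with ha
    set b := Complex.re (inner ℂ y (A y) : ℂ) with hbdef
    have hsym : (inner ℂ h (A y) : ℂ) = (starRingEnd ℂ) (inner ℂ y (A h) : ℂ) := by
      conv_lhs => rw [← hadj]
      rw [ContinuousLinearMap.adjoint_inner_right, ← inner_conj_symm]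
    have hquad : ∀ t : ℝ, 0 ≤ 2 * t * a + t ^ 2 * b := by
      intro t
      have h0 := hpos (h + (t : ℂ) • y)
      have hexp : (inner ℂ (h + (t:ℂ) • y) (A (h + (t:ℂ) • y)) : ℂ)
          = inner ℂ h (A h) + (t:ℂ) * inner ℂ h (A y) + (t:ℂ) * inner ℂ y (A h)
            + (t:ℂ)^2 * inner ℂ y (A y) := by
        rw [map_add, map_smul, inner_add_left, inner_add_right, inner_add_right,
          inner_smul_left, inner_smul_right, inner_smul_left, inner_smul_right,
          Complex.conj_ofReal]
        ring
      rw [hexp] at h0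
      simp only [Complex.add_re, Complex.mul_re, Complex.ofReal_re, Complex.ofReal_im,
        hh, Complex.zero_re] at h0
      rw [hsym] at h0
      simp only [Complex.conj_re, Complex.conj_im] at h0
      have hpow : ((t:ℂ)^2).re = t^2 ∧ ((t:ℂ)^2).im = 0 := by
        constructor <;> simp [pow_two, Complex.mul_re, Complex.mul_im]
      rw [hpow.1, hpow.2] at h0
      nlinarith [h0]
    by_contra hne
    have ha2 : 0 < a ^ 2 := by positivity
    set ε : ℝ := 1 / (2 * (|b| + 1)) with hε
    have habs : 0 ≤ |b| := abs_nonneg b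
    have hεpos : 0 < ε := by rw [hε]; positivity
    have hεb : ε * (|b| + 1) = 1 / 2 := by rw [hε]; field_simp
    have hbb : b ≤ |b| := le_abs_self b
    have := hquad (-a * ε)
    nlinarith [this, mul_pos ha2 hεpos]
  have h2 := key (A h)
  have h3 : ‖A h‖ ^ 2 = 0 := by
    rw [← inner_self_eq_norm_sq (𝕜 := ℂ)]
    exact h2
  simpa using pow_eq_zero_iff (n := 2) (by norm_num) |>.mp h3

lemma blockOp_apply' (D : M →L[ℂ] M) (C : K →L[ℂ] M) (B : M →L[ℂ] K) (F : K →L[ℂ] K)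
    (a : M) (b : K) :
    blockOp D C B F ((WithLp.prodContinuousLinearEquiv 2 ℂ M K).symm (a, b)) =
      (WithLp.prodContinuousLinearEquiv 2 ℂ M K).symm (D a + C b, B a + F b) := rfl

lemma inlM_eq (m : M) :
    (inlM m : WithLp 2 (M × K)) = (WithLp.prodContinuousLinearEquiv 2 ℂ M K).symm (m, 0) := rfl

lemma inner_pair (a c : M) (b d : K) :
    (inner ℂ ((WithLp.prodContinuousLinearEquiv 2 ℂ M K).symm (a, b))
      ((WithLp.prodContinuousLinearEquiv 2 ℂ M K).symm (c, d)) : ℂ)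
      = inner ℂ a c + inner ℂ b d := rfl

lemma norm_pair (a : M) (b : K) :
    ‖(WithLp.prodContinuousLinearEquiv 2 ℂ M K).symm (a, b)‖ ^ 2 = ‖a‖ ^ 2 + ‖b‖ ^ 2 := by
  rw [WithLp.prod_norm_sq_eq_of_L2]; rfl

set_option maxHeartbeats 1000000 in
set_option synthInstance.maxHeartbeats 400000 in
/-- Let `τ = {T; M, M, K}` be a passive selfadjoint system (so
`T = [[D, C], [C*, F]]` is a selfadjoint contraction on `M ⊕ K`) which is minimal, i.e.
`T` is `M`-simple.  If the transfer function `Ω(z) = D + zC(I − zF)⁻¹C*` takes unitary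
values at every point of the unit circle distinct from `±1`, then `T` is unitary. -/
theorem minimal_inner_implies_conservative (D : M →L[ℂ] M) (C : K →L[ℂ] M) (F : K →L[ℂ] K)
    (hD : IsSelfAdjoint D) (hF : IsSelfAdjoint F)
    (hTsa : IsSelfAdjoint (blockOp D C (adjoint C) F))
    (hTcontr : ‖blockOp D C (adjoint C) F‖ ≤ 1)
    (hmin : Dense (Submodule.span ℂ
      (Set.range fun p : ℕ × M => ((blockOp D C (adjoint C) F) ^ p.1) (inlM p.2)) :
        Set (WithLp 2 (M × K))))
    (hinner : ∀ ξ : ℂ, ‖ξ‖ = 1 → ξ ≠ 1 → ξ ≠ -1 →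
      D + ξ • (C ∘L Ring.inverse ((1 : K →L[ℂ] K) - ξ • F) ∘L adjoint C) ∈
        unitary (M →L[ℂ] M)) :
    blockOp D C (adjoint C) F ∈ unitary (WithLp 2 (M × K) →L[ℂ] WithLp 2 (M × K)) := by
  classical
  set e := WithLp.prodContinuousLinearEquiv 2 ℂ M K with he
  set T := blockOp D C (adjoint C) F with hTdef
  set P : WithLp 2 (M × K) →L[ℂ] WithLp 2 (M × K) := 1 - T ^ 2 with hPdef
  have hTadj : ContinuousLinearMap.adjoint T = T := isSelfAdjoint_iff'.mp hTsa
  have hinnerT : ∀ x y : WithLp 2 (M × K), (inner ℂ x (T y) : ℂ) = inner ℂ (T x) y := by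
    intro x y
    conv_lhs => rw [← hTadj]
    rw [ContinuousLinearMap.adjoint_inner_right]
  have hT2app : ∀ x : WithLp 2 (M × K), (T ^ 2) x = T (T x) := by
    intro x; rw [sq, ContinuousLinearMap.mul_apply]
  have hPapp : ∀ x : WithLp 2 (M × K), P x = x - T (T x) := by
    intro x
    rw [hPdef, ContinuousLinearMap.sub_apply, ContinuousLinearMap.one_apply, hT2app]
  -- positivity of P
  have hPpos : ∀ x : WithLp 2 (M × K), 0 ≤ Complex.re (inner ℂ x (P x) : ℂ) := by
    intro x
    have h1 : (inner ℂ x (P x) : ℂ) = inner ℂ x x - inner ℂ (T x) (T x) := by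
      rw [hPapp, inner_sub_right, hinnerT]
    have hTx : ‖T x‖ ≤ ‖x‖ := by
      calc ‖T x‖ ≤ ‖T‖ * ‖x‖ := T.le_opNorm x
        _ ≤ 1 * ‖x‖ := mul_le_mul_of_nonneg_right hTcontr (norm_nonneg x)
        _ = ‖x‖ := one_mul _
    have e1 : (inner ℂ x x : ℂ).re = ‖x‖ ^ 2 := inner_self_eq_norm_sq (𝕜 := ℂ) x
    have e2 : (inner ℂ (T x) (T x) : ℂ).re = ‖T x‖ ^ 2 := inner_self_eq_norm_sq (𝕜 := ℂ) (T x)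
    rw [h1, Complex.sub_re, e1, e2]
    nlinarith [norm_nonneg (T x), norm_nonneg x]
  have hPsa : IsSelfAdjoint P := by
    exact IsSelfAdjoint.sub (R := WithLp 2 (M × K) →L[ℂ] WithLp 2 (M × K)) (IsSelfAdjoint.one _) (hTsa.pow 2)
  -- ‖F‖ ≤ 1
  have hFnorm : ‖F‖ ≤ 1 := by
    refine opNorm_le_bound F (by norm_num) fun k => ?_
    have h1 : T (e.symm (0, k)) = e.symm (C k, F k) := by
      rw [hTdef, he, blockOp_apply']
      simp
    have h2 : ‖F k‖ ^ 2 ≤ ‖e.symm (C k, F k)‖ ^ 2 := by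
      rw [norm_pair]; nlinarith [norm_nonneg (C k)]
    have h3 : ‖e.symm (C k, F k)‖ ≤ ‖k‖ := by
      rw [← h1]
      calc ‖T (e.symm (0, k))‖ ≤ ‖T‖ * ‖e.symm (0, k)‖ := T.le_opNorm _
        _ ≤ 1 * ‖e.symm (0, k)‖ := mul_le_mul_of_nonneg_right hTcontr (norm_nonneg _)
        _ = ‖k‖ := by
            rw [one_mul]
            have h4 : ‖e.symm ((0 : M), k)‖ ^ 2 = ‖k‖ ^ 2 := by
              rw [norm_pair]; simp
            have h5 := congrArg Real.sqrt h4
            rwa [Real.sqrt_sq (norm_nonneg _), Real.sqrt_sq (norm_nonneg _)] at h5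
    rw [one_mul]
    nlinarith [norm_nonneg (F k), norm_nonneg k, norm_nonneg (e.symm (C k, F k)),
      sq_nonneg (‖F k‖ + ‖k‖)]
  -- invertibility of 1 - z • F on Zdom
  have hUnit : ∀ z ∈ Zdom, IsUnit ((1 : K →L[ℂ] K) - z • F) := by
    intro z hz
    rcases subsingleton_or_nontrivial K with hK | hK
    · haveI : Subsingleton (K →L[ℂ] K) :=
        ⟨fun f g => ContinuousLinearMap.ext fun x => Subsingleton.elim _ _⟩
      exact ⟨⟨(1 : K →L[ℂ] K) - z • F, 1, Subsingleton.elim _ _, Subsingleton.elim _ _⟩, rfl⟩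
    rcases eq_or_ne z 0 with rfl | hz0
    · simpa using isUnit_one (M := K →L[ℂ] K)
    have hspec : (z⁻¹ : ℂ) ∉ spectrum ℂ F := by
      intro hmem
      have hre := hF.mem_spectrum_eq_re hmem
      have hnorm1 : ‖(z⁻¹ : ℂ)‖ ≤ 1 := (spectrum.norm_le_norm_of_mem hmem).trans hFnorm
      have hznorm : 1 ≤ ‖z‖ := by
        rw [norm_inv] at hnorm1
        have hzpos : 0 < ‖z‖ := norm_pos_iff.mpr hz0
        rw [inv_le_one_iff₀] at hnorm1
        rcases hnorm1 with h | h
        · linarith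
        · exact h
      have him : z.im = 0 := by
        have h5 : (z⁻¹ : ℂ).im = 0 := by rw [hre]; simp
        rw [Complex.inv_im] at h5
        rcases div_eq_zero_iff.mp h5 with h7 | h7
        · exact neg_eq_zero.mp h7
        · exact absurd h7 (Complex.normSq_pos.mpr hz0).ne'
      rw [mem_Zdom] at hz
      rcases hz with h | ⟨h1, h2⟩
      · exact h him
      · have hzr : z = (z.re : ℂ) := Complex.ext (by simp) (by simp [him])
        rw [hzr] at hznorm
        rw [Complex.norm_real, Real.norm_eq_abs] at hznorm
        rcases abs_le.mp (le_of_lt (abs_lt.mpr ⟨h1, h2⟩)) with ⟨_, _⟩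
        have := abs_lt.mpr ⟨h1, h2⟩
        linarith
    rw [spectrum.notMem_iff] at hspec
    have halg : algebraMap ℂ (K →L[ℂ] K) z⁻¹ = z⁻¹ • (1 : K →L[ℂ] K) :=
      Algebra.algebraMap_eq_smul_one _
    have key : (1 : K →L[ℂ] K) - z • F = z • (z⁻¹ • (1 : K →L[ℂ] K) - F) := by
      rw [smul_sub, smul_smul, mul_inv_cancel₀ hz0, one_smul]
    rw [key, Algebra.smul_def]
    exact (IsUnit.map (algebraMap ℂ (K →L[ℂ] K)) (isUnit_iff_ne_zero.mpr hz0)).mul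
      (by rw [← halg]; exact hspec)
  -- the key pointwise vanishing
  have hkey : ∀ m : M, P (inlM m) = 0 := by
    intro m
    set φ : ℂ → WithLp 2 (M × K) := fun z =>
      P (e.symm (m, z • (Ring.inverse ((1 : K →L[ℂ] K) - z • F) (adjoint C m)))) with hφ
    have hφdiff : DifferentiableOn ℂ φ Zdom := by
      intro z hz
      apply DifferentiableAt.differentiableWithinAt
      have h1 : DifferentiableAt ℂ (fun z : ℂ => (1 : K →L[ℂ] K) - z • F) z :=
        (differentiableAt_const _).sub (differentiableAt_id.smul_const F)
      have h2 : DifferentiableAt ℂ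
          (fun z : ℂ => Ring.inverse ((1 : K →L[ℂ] K) - z • F)) z :=
        by have := (differentiableAt_inverse (𝕜 := ℂ) (hUnit z hz)).comp z h1; exact this
      have h3 : DifferentiableAt ℂ
          (fun z : ℂ => Ring.inverse ((1 : K →L[ℂ] K) - z • F) (adjoint C m)) z :=
        (ContinuousLinearMap.apply ℂ K (adjoint C m)).differentiableAt.comp z h2
      have h4 : DifferentiableAt ℂ
          (fun z : ℂ => z • (Ring.inverse ((1 : K →L[ℂ] K) - z • F) (adjoint C m))) z :=
        differentiableAt_id.smul h3
      have h5 : DifferentiableAt ℂ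
          (fun z : ℂ => ((m : M), z • (Ring.inverse ((1 : K →L[ℂ] K) - z • F) (adjoint C m)))) z :=
        (differentiableAt_const m).prodMk h4
      exact (P.comp (e.symm : (M × K) →L[ℂ] WithLp 2 (M × K))).differentiableAt.comp z h5
    have hφzero : ∀ ξ : ℂ, ‖ξ‖ = 1 → ξ ≠ 1 → ξ ≠ -1 → φ ξ = 0 := by
      intro ξ hξ hξ1 hξ2
      have hξZ : ξ ∈ Zdom := by
        rw [mem_Zdom]
        left
        intro him
        have hzr : ξ = (ξ.re : ℂ) := Complex.ext (by simp) (by simp [him])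
        rw [hzr, Complex.norm_real, Real.norm_eq_abs] at hξ
        rcases abs_eq (by norm_num : (0:ℝ) ≤ 1) |>.mp hξ with h | h
        · exact hξ1 (by rw [hzr, h]; norm_num)
        · exact hξ2 (by rw [hzr, h]; norm_num)
      set k := Ring.inverse ((1 : K →L[ℂ] K) - ξ • F) (adjoint C m) with hk
      have hku : adjoint C m + ξ • F k = k := by
        have hcancel := Ring.mul_inverse_cancel _ (hUnit ξ hξZ)
        have h6 := congrArg (fun A : K →L[ℂ] K => A (adjoint C m)) hcancel
        simp only [ContinuousLinearMap.mul_apply, ContinuousLinearMap.sub_apply,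
          ContinuousLinearMap.smul_apply, ContinuousLinearMap.one_apply] at h6
        rw [← hk] at h6
        -- h6 : k - ξ • F k = adjoint C m
        rw [← h6]; abel
      set Ω := D + ξ • (C ∘L Ring.inverse ((1 : K →L[ℂ] K) - ξ • F) ∘L adjoint C) with hΩ
      have hΩm : Ω m = D m + ξ • C k := by
        rw [hΩ]
        simp only [ContinuousLinearMap.add_apply, ContinuousLinearMap.smul_apply,
          ContinuousLinearMap.comp_apply]
        rfl
      have hTh : T (e.symm (m, ξ • k)) = e.symm (Ω m, k) := by
        rw [hTdef, he, blockOp_apply']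
        congr 1
        refine Prod.ext ?_ ?_
        · show D m + C (ξ • k) = Ω m
          rw [map_smul, hΩm]
        · show adjoint C m + F (ξ • k) = k
          rw [map_smul]; exact hku
      have hΩunit := hinner ξ hξ hξ1 hξ2
      rw [← hΩ] at hΩunit
      have hΩiso : (inner ℂ (Ω m) (Ω m) : ℂ) = inner ℂ m m := by
        have h7 : ContinuousLinearMap.adjoint Ω (Ω m) = m := by
          have h8 := (Unitary.mem_iff.mp hΩunit).1
          rw [ContinuousLinearMap.star_eq_adjoint] at h8
          calc ContinuousLinearMap.adjoint Ω (Ω m)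
              = (ContinuousLinearMap.adjoint Ω * Ω) m := rfl
            _ = m := by rw [h8]; rfl
        have h9 := ContinuousLinearMap.adjoint_inner_right Ω m (Ω m)
        rw [h7] at h9
        exact h9.symm
      have hinner0 : (inner ℂ (e.symm (m, ξ • k)) (P (e.symm (m, ξ • k))) : ℂ) = 0 := by
        rw [hPapp, inner_sub_right, hinnerT, hTh]
        rw [inner_pair, inner_pair, hΩiso, inner_smul_left, inner_smul_right]
        have hc : (starRingEnd ℂ) ξ * ξ = 1 := by
          rw [mul_comm, Complex.mul_conj]
          norm_cast
          rw [Complex.normSq_eq_norm_sq]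
          rw [hξ]
          norm_num
        rw [← mul_assoc, hc, one_mul]
        ring
      have h9 := inner_cancel P hPsa hPpos _ hinner0
      exact h9
    have hIZ : Complex.I ∈ Zdom := by rw [mem_Zdom]; left; simp
    have h0Z : (0 : ℂ) ∈ Zdom := by rw [mem_Zdom]; right; norm_num
    -- the sequence of circle points tending to I
    have hfreq : ∃ᶠ z in nhdsWithin Complex.I {Complex.I}ᶜ, φ z = 0 := by
      set u : ℕ → ℂ := fun n => Complex.exp ((Real.pi / 2 + 1 / (n + 1) : ℝ) * Complex.I)
        with hu
      have hθfacts : ∀ n : ℕ, Real.pi / 2 < Real.pi / 2 + 1 / (n + 1)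
          ∧ Real.pi / 2 + 1 / (n + 1 : ℝ) < Real.pi := by
        intro n
        have hn : (0 : ℝ) < n + 1 := by positivity
        have h1n : 1 / (n + 1 : ℝ) ≤ 1 := by
          rw [div_le_one hn]; linarith
        have hpi : (3 : ℝ) < Real.pi := Real.pi_gt_three
        constructor
        · have : 0 < 1 / (n + 1 : ℝ) := by positivity
          linarith
        · linarith
      have hre : ∀ n : ℕ, (u n).re < 0 := by
        intro n
        rw [hu]
        simp only
        rw [Complex.exp_ofReal_mul_I_re]
        exact Real.cos_neg_of_pi_div_two_lt_of_lt (hθfacts n).1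
          (by have := (hθfacts n).2; have := Real.pi_pos; linarith)
      have him : ∀ n : ℕ, 0 < (u n).im := by
        intro n
        rw [hu]
        simp only
        rw [Complex.exp_ofReal_mul_I_im]
        refine Real.sin_pos_of_pos_of_lt_pi ?_ (hθfacts n).2
        have := (hθfacts n).1; have := Real.pi_pos; linarith
      have hnorm : ∀ n : ℕ, ‖u n‖ = 1 := by
        intro n
        rw [hu]
        simp only
        rw [Complex.norm_exp_ofReal_mul_I]
      have hne1 : ∀ n : ℕ, u n ≠ 1 := by
        intro n h
        have := him n; rw [h] at this; simp at this
      have hne2 : ∀ n : ℕ, u n ≠ -1 := by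
        intro n h
        have := him n; rw [h] at this; simp at this
      have hneI : ∀ n : ℕ, u n ≠ Complex.I := by
        intro n h
        have := hre n; rw [h] at this; simp at this
      have htend : Filter.Tendsto u Filter.atTop (nhdsWithin Complex.I {Complex.I}ᶜ) := by
        rw [tendsto_nhdsWithin_iff]
        constructor
        · have hθ : Filter.Tendsto (fun n : ℕ => (Real.pi / 2 + 1 / (n + 1) : ℝ))
              Filter.atTop (nhds (Real.pi / 2)) := by
            have h1 := tendsto_one_div_add_atTop_nhds_zero_nat (𝕜 := ℝ)
            have := Filter.Tendsto.const_add (Real.pi / 2) h1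
            simpa using this
          have hcont : Continuous (fun θ : ℝ => Complex.exp ((θ : ℂ) * Complex.I)) := by
            fun_prop
          have h2 := (hcont.tendsto (Real.pi / 2)).comp hθ
          have h3 : Complex.exp ((Real.pi / 2 : ℝ) * Complex.I) = Complex.I := by
            rw [Complex.exp_mul_I, ← Complex.ofReal_cos, ← Complex.ofReal_sin,
              Real.cos_pi_div_two, Real.sin_pi_div_two]
            simp
          rw [h3] at h2
          exact h2
        · exact Filter.Eventually.of_forall fun n => hneI n
      exact htend.frequently (Filter.Eventually.of_forall
        (fun n => hφzero (u n) (hnorm n) (hne1 n) (hne2 n))).frequently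
    have hEq := (hφdiff.analyticOnNhd isOpen_Zdom).eqOn_zero_of_preconnected_of_frequently_eq_zero
      isPreconnected_Zdom hIZ hfreq
    have h0 := hEq h0Z
    rw [hφ] at h0
    simp only [zero_smul] at h0
    rw [inlM_eq]
    exact h0
  -- conclude T^2 = 1
  have hrange : ∀ p : ℕ × M, P ((T ^ p.1) (inlM p.2)) = 0 := by
    rintro ⟨n, m⟩
    have hcomm : P * T ^ n = T ^ n * P := by
      have h1 : Commute P (T ^ n) :=
        (Commute.one_left (T ^ n)).sub_left ((Commute.refl T).pow_pow 2 n)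
      exact h1
    calc P ((T ^ n) (inlM m)) = (P * T ^ n) (inlM m) := rfl
      _ = (T ^ n * P) (inlM m) := by rw [hcomm]
      _ = (T ^ n) (P (inlM m)) := rfl
      _ = 0 := by rw [hkey]; exact map_zero _
  have hall : ∀ x : WithLp 2 (M × K), P x = 0 := by
    have hsub : (Set.range fun p : ℕ × M => (T ^ p.1) (inlM p.2))
        ⊆ ((LinearMap.ker (P : WithLp 2 (M × K) →ₗ[ℂ] WithLp 2 (M × K)) : Submodule ℂ (WithLp 2 (M × K))) : Set (WithLp 2 (M × K))) := by
      rintro x ⟨p, rfl⟩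
      simp only [SetLike.mem_coe, LinearMap.mem_ker]
      exact hrange p
    have hspan := Submodule.span_le.mpr hsub
    have hclosed : IsClosed ((LinearMap.ker (P : WithLp 2 (M × K) →ₗ[ℂ] WithLp 2 (M × K)) : Submodule ℂ (WithLp 2 (M × K)))
        : Set (WithLp 2 (M × K))) :=
      isClosed_singleton.preimage P.continuous
    intro x
    have hx : x ∈ closure ((Submodule.span ℂ
        (Set.range fun p : ℕ × M => (T ^ p.1) (inlM p.2)))
          : Set (WithLp 2 (M × K))) := by
      rw [hmin.closure_eq]; trivial
    have := closure_minimal hspan hclosed hx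
    exact this
  have hT2 : T ^ 2 = 1 := by
    have hP0 : P = 0 := ContinuousLinearMap.ext fun x => by
      rw [hall x]; rfl
    rw [hPdef] at hP0
    have := sub_eq_zero.mp hP0
    exact this.symm
  rw [Unitary.mem_iff]
  constructor
  · rw [hTsa.star_eq, ← sq, hT2]
  · rw [hTsa.star_eq, ← sq, hT2]
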